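/- Suppose the X°×X° matrix S = (I_{X°} − P_{X°})² + P_{X°,∂X} P_{∂X,X°} is invertible. Then for every f ∈ L(X°) and g ∈ L(∂X) there is a unique u ∈ L(X) such that Δ²u = f on X° and u = g on ∂X. It is given by u_{∂X} = g and u_{X°} = S^{-1}( f + U g ), where U = (I_{X°} − P_{X°}) P_{X°,∂X} + P_{X°,∂X} (I_{∂X} − P_{∂X}). -/

import Mathlib

open Matrix Finset

/-- The Laplacian `Δu = Pu − u` acting on complex functions. -/
noncomputable def lap {X : Type*} [Fintype X] (P : Matrix X X ℝ) (u : X → ℂ) (x : X) : ℂ :=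
  (∑ y, (P x y : ℂ) * u y) - u x

/-- The `A × A` submatrix of `P`. -/
def subMatrix {X : Type*} (P : Matrix X X ℝ) (A : Finset X) : Matrix A A ℝ :=
  Matrix.of fun x y => P x.1 y.1

/-- The `A × B` block of `P`. -/
def subMatrix2 {X : Type*} (P : Matrix X X ℝ) (A B : Finset X) : Matrix A B ℝ :=
  Matrix.of fun x y => P x.1 y.1

/-- The matrix `S = (I_{X°} − P_{X°})² + P_{X°,∂X} P_{∂X,X°}`. -/
noncomputable def Smat {X : Type*} [Fintype X] [DecidableEq X] (P : Matrix X X ℝ)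
    (Bnd : Finset X) : Matrix ↥Bndᶜ ↥Bndᶜ ℝ :=
  (1 - subMatrix P Bndᶜ) ^ 2 + subMatrix2 P Bndᶜ Bnd * subMatrix2 P Bnd Bndᶜ

/-- The matrix `U = (I_{X°} − P_{X°})P_{X°,∂X} + P_{X°,∂X}(I_{∂X} − P_{∂X})`. -/
noncomputable def Umat {X : Type*} [Fintype X] [DecidableEq X] (P : Matrix X X ℝ)
    (Bnd : Finset X) : Matrix ↥Bndᶜ ↥Bnd ℝ :=
  (1 - subMatrix P Bndᶜ) * subMatrix2 P Bndᶜ Bnd +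
    subMatrix2 P Bndᶜ Bnd * (1 - subMatrix P Bnd)

lemma lap_blocks {X : Type*} [Fintype X] [DecidableEq X] (P : Matrix X X ℝ)
    (A B : Finset X) (hAB : B = Aᶜ) (v : X → ℂ) (x : X) (hx : x ∈ A) :
    lap P v x = (((subMatrix P A).map Complex.ofReal - 1) *ᵥ (fun y : ↥A => v y.1)) ⟨x, hx⟩
      + ((subMatrix2 P A B).map Complex.ofReal *ᵥ (fun z : ↥B => v z.1)) ⟨x, hx⟩ := by
  subst hAB
  rw [Matrix.sub_mulVec, Matrix.one_mulVec]
  simp only [lap, Pi.sub_apply, Matrix.mulVec, dotProduct,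
    Matrix.map_apply, subMatrix, subMatrix2, Matrix.of_apply]
  have h1 : ∑ y : ↥A, (P x y.1 : ℂ) * v y.1 = ∑ y ∈ A, (P x y : ℂ) * v y :=
    Finset.sum_coe_sort _ (fun y => (P x y : ℂ) * v y)
  have h2 : ∑ y : ↥Aᶜ, (P x y.1 : ℂ) * v y.1 = ∑ y ∈ Aᶜ, (P x y : ℂ) * v y :=
    Finset.sum_coe_sort _ (fun y => (P x y : ℂ) * v y)
  rw [h1, h2, ← Finset.sum_add_sum_compl A (fun y => (P x y : ℂ) * v y)]
  ring

lemma smat_map {X : Type*} [Fintype X] [DecidableEq X] (P : Matrix X X ℝ) (Bnd : Finset X) :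
    (Smat P Bnd).map Complex.ofReal
      = (1 - (subMatrix P Bndᶜ).map Complex.ofReal) ^ 2 +
        (subMatrix2 P Bndᶜ Bnd).map Complex.ofReal *
          (subMatrix2 P Bnd Bndᶜ).map Complex.ofReal := by
  rw [Smat, show Complex.ofReal = ⇑Complex.ofRealHom from rfl]
  rw [Matrix.map_add _ (map_add Complex.ofRealHom) _ _, pow_two, pow_two,
    Matrix.map_mul, Matrix.map_mul,
    Matrix.map_sub _ (map_sub Complex.ofRealHom),
    Matrix.map_one _ (map_zero Complex.ofRealHom) (map_one Complex.ofRealHom)]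

lemma umat_map {X : Type*} [Fintype X] [DecidableEq X] (P : Matrix X X ℝ) (Bnd : Finset X) :
    (Umat P Bnd).map Complex.ofReal
      = (1 - (subMatrix P Bndᶜ).map Complex.ofReal) *
          (subMatrix2 P Bndᶜ Bnd).map Complex.ofReal +
        (subMatrix2 P Bndᶜ Bnd).map Complex.ofReal *
          (1 - (subMatrix P Bnd).map Complex.ofReal) := by
  rw [Umat, show Complex.ofReal = ⇑Complex.ofRealHom from rfl]
  rw [Matrix.map_add _ (map_add Complex.ofRealHom) _ _,
    Matrix.map_mul, Matrix.map_mul,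
    Matrix.map_sub _ (map_sub Complex.ofRealHom),
    Matrix.map_sub _ (map_sub Complex.ofRealHom),
    Matrix.map_one _ (map_zero Complex.ofRealHom) (map_one Complex.ofRealHom),
    Matrix.map_one _ (map_zero Complex.ofRealHom) (map_one Complex.ofRealHom)]

lemma key_identity {X : Type*} [Fintype X] [DecidableEq X] (P : Matrix X X ℝ)
    (Bnd : Finset X) (g u : X → ℂ) (hug : ∀ x ∈ Bnd, u x = g x) (x : X) (hx : x ∈ Bndᶜ) :
    lap P (lap P u) x
      = ((Smat P Bnd).map Complex.ofReal *ᵥ (fun y : ↥Bndᶜ => u y.1)) ⟨x, hx⟩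
        - ((Umat P Bnd).map Complex.ofReal *ᵥ (fun z : ↥Bnd => g z.1)) ⟨x, hx⟩ := by
  set A := (subMatrix P Bndᶜ).map Complex.ofReal with hA
  set B := (subMatrix2 P Bndᶜ Bnd).map Complex.ofReal with hBdef
  set C := (subMatrix2 P Bnd Bndᶜ).map Complex.ofReal with hC
  set D := (subMatrix P Bnd).map Complex.ofReal with hD
  set u0 : ↥Bndᶜ → ℂ := fun y => u y.1 with hu0
  set g0 : ↥Bnd → ℂ := fun z => g z.1 with hg0
  have hin : (fun y : ↥Bndᶜ => lap P u y.1) = (A - 1) *ᵥ u0 + B *ᵥ g0 := by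
    funext y
    rw [lap_blocks P Bndᶜ Bnd (compl_compl _).symm u y.1 y.2]
    have : (fun z : ↥Bnd => u z.1) = g0 := funext fun z => hug z.1 z.2
    simp [this, Subtype.eta]
    rfl
  have hbd : (fun z : ↥Bnd => lap P u z.1) = C *ᵥ u0 + (D - 1) *ᵥ g0 := by
    funext z
    rw [lap_blocks P Bnd Bndᶜ rfl u z.1 z.2]
    have : (fun z : ↥Bnd => u z.1) = g0 := funext fun z => hug z.1 z.2
    simp [this, Subtype.eta, add_comm]
    rw [add_comm]
  rw [lap_blocks P Bndᶜ Bnd (compl_compl _).symm (lap P u) x hx, hin, hbd]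
  have hS' : (Smat P Bnd).map Complex.ofReal = (A - 1) * (A - 1) + B * C := by
    rw [smat_map, ← hA, ← hBdef, ← hC]; noncomm_ring
  have hU' : (Umat P Bnd).map Complex.ofReal = -((A - 1) * B + B * (D - 1)) := by
    rw [umat_map, ← hA, ← hBdef, ← hD, ← neg_sub A 1, ← neg_sub D 1, Matrix.neg_mul, Matrix.mul_neg, neg_add]
  rw [hS', hU']
  simp only [Matrix.mulVec_add, Matrix.mulVec_mulVec, Matrix.add_mulVec, Matrix.neg_mulVec,
    Pi.add_apply, Pi.neg_apply, Pi.sub_apply, sub_neg_eq_add]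
  ring

/-- If `S` is invertible, the bi-Laplace Dirichlet problem
`Δ²u = f` on `X°`, `u = g` on `∂X` has a unique solution, given by
`u_{X°} = S⁻¹(f + Ug)` and `u_{∂X} = g`. -/
theorem bilaplace_dirichlet_problem {X : Type*} [Fintype X] [DecidableEq X]
    (P : Matrix X X ℝ)
    (hcard : 1 < Fintype.card X)
    (hnonneg : ∀ x y, 0 ≤ P x y)
    (hrow : ∀ x, ∑ y, P x y = 1)
    (hirr : ∀ x y, ∃ n, 1 ≤ n ∧ 0 < (P ^ n) x y)
    (Bnd : Finset X) (hB : Bnd.Nonempty) (hB' : Bnd ≠ Finset.univ)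
    (hS : IsUnit (Smat P Bnd))
    (f g : X → ℂ) :
    (∃! u : X → ℂ,
      (∀ x, x ∉ Bnd → lap P (lap P u) x = f x) ∧ (∀ x ∈ Bnd, u x = g x)) ∧
    (∀ u : X → ℂ,
      ((∀ x, x ∉ Bnd → lap P (lap P u) x = f x) ∧ (∀ x ∈ Bnd, u x = g x)) →
      ∀ x, ∀ hx : x ∈ Bndᶜ,
        u x = ∑ y : ↥Bndᶜ, (((Smat P Bnd)⁻¹ ⟨x, hx⟩ y : ℝ) : ℂ) *
          (f y.1 + ∑ z : ↥Bnd, ((Umat P Bnd y z : ℝ) : ℂ) * g z.1)) := by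
  classical
  set Sc : Matrix ↥Bndᶜ ↥Bndᶜ ℂ := (Smat P Bnd).map Complex.ofReal with hScdef
  have hdetR : IsUnit (Smat P Bnd).det := (Matrix.isUnit_iff_isUnit_det _).1 hS
  have hdetC : IsUnit Sc.det := by
    have hd : Sc.det = Complex.ofReal ((Smat P Bnd).det) := by
      rw [hScdef, show Complex.ofReal = ⇑Complex.ofRealHom from rfl]
      exact (RingHom.map_det Complex.ofRealHom (Smat P Bnd)).symm
    rw [hd, isUnit_iff_ne_zero, Complex.ofReal_ne_zero]
    exact isUnit_iff_ne_zero.1 hdetR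
  have hl : Sc⁻¹ * Sc = 1 := Matrix.nonsing_inv_mul Sc hdetC
  have hr : Sc * Sc⁻¹ = 1 := Matrix.mul_nonsing_inv Sc hdetC
  set g0 : ↥Bnd → ℂ := fun z => g z.1 with hg0
  set w : ↥Bndᶜ → ℂ :=
    fun y => f y.1 + ((Umat P Bnd).map Complex.ofReal *ᵥ g0) y with hw
  set v : ↥Bndᶜ → ℂ := Sc⁻¹ *ᵥ w with hv
  set u₀ : X → ℂ :=
    fun x => if hx : x ∈ Bnd then g x else v ⟨x, Finset.mem_compl.2 hx⟩ with hu₀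
  have hu₀g : ∀ x ∈ Bnd, u₀ x = g x := fun x hx => dif_pos hx
  have hu₀0 : (fun y : ↥Bndᶜ => u₀ y.1) = v := by
    funext y
    show (if hx : y.1 ∈ Bnd then g y.1 else v ⟨y.1, Finset.mem_compl.2 hx⟩) = v y
    rw [dif_neg (Finset.mem_compl.1 y.2)]
  have hSv : Sc *ᵥ v = w := by
    rw [hv, Matrix.mulVec_mulVec, hr, Matrix.one_mulVec]
  have sol : (∀ x, x ∉ Bnd → lap P (lap P u₀) x = f x) ∧ (∀ x ∈ Bnd, u₀ x = g x) := by
    refine ⟨fun x hx => ?_, hu₀g⟩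
    have hx' : x ∈ Bndᶜ := Finset.mem_compl.2 hx
    rw [key_identity P Bnd g u₀ hu₀g x hx', hu₀0, hSv]
    simp [hw]
    exact add_sub_cancel_right _ _
  have uniq : ∀ u : X → ℂ,
      ((∀ x, x ∉ Bnd → lap P (lap P u) x = f x) ∧ (∀ x ∈ Bnd, u x = g x)) →
      (fun y : ↥Bndᶜ => u y.1) = v := by
    rintro u ⟨h1, h2⟩
    have hSu : Sc *ᵥ (fun y : ↥Bndᶜ => u y.1) = w := by
      funext y
      have hk := key_identity P Bnd g u h2 y.1 y.2
      have h1y := h1 y.1 (Finset.mem_compl.1 y.2)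
      rw [h1y] at hk
      have : (⟨y.1, y.2⟩ : ↥Bndᶜ) = y := rfl
      rw [this] at hk
      have hfin := sub_eq_iff_eq_add.1 hk.symm
      rw [hw]
      exact hfin
    calc (fun y : ↥Bndᶜ => u y.1)
        = (Sc⁻¹ * Sc) *ᵥ (fun y : ↥Bndᶜ => u y.1) := by
          rw [hl, Matrix.one_mulVec]
      _ = Sc⁻¹ *ᵥ (Sc *ᵥ (fun y : ↥Bndᶜ => u y.1)) := (Matrix.mulVec_mulVec _ _ _).symm
      _ = v := by rw [hSu, hv]
  have hinvmap : Sc⁻¹ = ((Smat P Bnd)⁻¹).map Complex.ofReal := by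
    apply Matrix.inv_eq_left_inv
    rw [hScdef, show Complex.ofReal = ⇑Complex.ofRealHom from rfl, ← Matrix.map_mul,
      Matrix.nonsing_inv_mul _ hdetR,
      Matrix.map_one _ (map_zero Complex.ofRealHom) (map_one Complex.ofRealHom)]
  constructor
  · refine ⟨u₀, sol, fun u hu => ?_⟩
    funext x
    by_cases hx : x ∈ Bnd
    · rw [hu.2 x hx, (hu₀g x hx).symm]
    · have := congrFun (uniq u hu) ⟨x, Finset.mem_compl.2 hx⟩
      rw [this]
      simp only [hu₀]
      rw [dif_neg hx]
  · intro u hu x hx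
    have := congrFun (uniq u hu) ⟨x, hx⟩
    rw [this, hv, hinvmap]
    simp only [Matrix.mulVec, dotProduct, Matrix.map_apply, hw, hg0]
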